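/- Let d ≥ 2, let P̄ be a closed subset of the unit sphere S^{d−1} in ℝ^d such that C = {λp : λ > 0, p ∈ P̄} ∪ {0} is a closed convex cone, and let a : ℝ^d → ℝ be convex and positively homogeneous of degree 1. Define A = {y ∈ ℝ^d : p·y ≤ a(p) for all p ∈ P̄}, and assume A is nonempty and the polar cone of P̄ contains a nonzero vector. Then the support function h_A(u) = sup_{y∈A} u·y satisfies: h_A(u) = a(u) for every u ∈ P̄, and h_A(u) = +∞ for every u ∈ S^{d−1} \ P̄. -/

import Mathlib

open scoped RealInnerProductSpace

section aux

variable {d : ℕ}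

local notation "E" => EuclideanSpace ℝ (Fin d)

/-- subadditivity from convexity + homogeneity -/
lemma aux_subadd (a : E → ℝ) (haconv : ConvexOn ℝ Set.univ a)
    (hahom : ∀ p : E, ∀ l : ℝ, 0 < l → a (l • p) = l * a p) (x y : E) :
    a (x + y) ≤ a x + a y := by
  have h := haconv.2 (Set.mem_univ x) (Set.mem_univ y) (by norm_num : (0:ℝ) ≤ 1/2)
    (by norm_num : (0:ℝ) ≤ 1/2) (by norm_num)
  have h2 : a (x + y) = 2 * a ((1/2 : ℝ) • (x + y)) := by
    rw [hahom _ (1/2) (by norm_num)]; ring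
  rw [smul_add] at h2
  simp only [smul_eq_mul] at h
  linarith

lemma aux_azero (a : E → ℝ)
    (hahom : ∀ p : E, ∀ l : ℝ, 0 < l → a (l • p) = l * a p) : a 0 = 0 := by
  have := hahom 0 2 (by norm_num)
  rw [smul_zero] at this; linarith

/-- existence of a subgradient at u: a linear functional g ≤ a with g u = a u -/
lemma aux_subgrad (a : E → ℝ) (haconv : ConvexOn ℝ Set.univ a)
    (hahom : ∀ p : E, ∀ l : ℝ, 0 < l → a (l • p) = l * a p)
    (u : E) (hu : u ≠ 0) :
    ∃ y : E, (∀ x : E, ⟪x, y⟫ ≤ a x) ∧ ⟪u, y⟫ = a u := by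
  have hneg : ∀ x : E, -a (-x) ≤ a x := by
    intro x
    have := aux_subadd a haconv hahom x (-x)
    rw [add_neg_cancel, aux_azero a hahom] at this
    linarith
  have hf : ∀ x : (LinearPMap.mkSpanSingleton u (a u) hu : E →ₗ.[ℝ] ℝ).domain,
      (LinearPMap.mkSpanSingleton u (a u) hu : E →ₗ.[ℝ] ℝ) x ≤ a x := by
    rintro ⟨x, hx⟩
    obtain ⟨c, rfl⟩ := Submodule.mem_span_singleton.1 hx
    have happ : (LinearPMap.mkSpanSingleton u (a u) hu : E →ₗ.[ℝ] ℝ) ⟨c • u, hx⟩ = c • (a u) := by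
      exact LinearPMap.mkSpanSingleton'_apply u (a u) _ c hx
    rw [happ]
    rcases lt_trichotomy c 0 with hc | hc | hc
    · have h1 : a (c • u) = (-c) * a (-u) := by
        have : c • u = (-c) • (-u) := by simp
        rw [this, hahom _ _ (by linarith)]
      have h2 := hneg u
      have : c • a u = c * a u := rfl
      rw [this, h1]
      nlinarith
    · subst hc; simp [aux_azero a hahom]
    · rw [hahom _ _ hc]; simp [smul_eq_mul]
  obtain ⟨g, hgf, hg⟩ := exists_extension_of_le_sublinear
    (LinearPMap.mkSpanSingleton u (a u) hu : E →ₗ.[ℝ] ℝ) a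
    (fun c hc x => hahom x c hc)
    (aux_subadd a haconv hahom) hf
  set G : E →L[ℝ] ℝ := LinearMap.toContinuousLinearMap g
  refine ⟨(InnerProductSpace.toDual ℝ E).symm G, fun x => ?_, ?_⟩
  · rw [real_inner_comm, InnerProductSpace.toDual_symm_apply]
    exact hg x
  · rw [real_inner_comm, InnerProductSpace.toDual_symm_apply]
    have := hgf ⟨u, Submodule.mem_span_singleton_self u⟩
    rw [LinearPMap.mkSpanSingleton_apply ℝ ℝ hu (a u)] at this
    exact this

end aux

/-- Lemma A.1 (polar-cone lemma): the support function of the half-space intersection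
`A = {y : p·y ≤ a(p) for p ∈ P̄}` equals `a` on `P̄` and is `+∞` on the rest of the
unit sphere, provided the cone generated by `P̄` (with `0`) is a closed convex cone and
the polar cone of `P̄` contains a nonzero vector. -/
theorem stmt8 (d : ℕ) (hd : 2 ≤ d)
    (Pb : Set (EuclideanSpace ℝ (Fin d))) (hPbclosed : IsClosed Pb)
    (hPbsph : ∀ p ∈ Pb, ‖p‖ = 1)
    (hCclosed : IsClosed ({q : EuclideanSpace ℝ (Fin d) |
        ∃ l : ℝ, 0 < l ∧ ∃ p ∈ Pb, q = l • p} ∪ {0}))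
    (hCconv : Convex ℝ ({q : EuclideanSpace ℝ (Fin d) |
        ∃ l : ℝ, 0 < l ∧ ∃ p ∈ Pb, q = l • p} ∪ {0}))
    (a : EuclideanSpace ℝ (Fin d) → ℝ)
    (haconv : ConvexOn ℝ Set.univ a)
    (hahom : ∀ p : EuclideanSpace ℝ (Fin d), ∀ l : ℝ, 0 < l → a (l • p) = l * a p)
    (hAne : {y : EuclideanSpace ℝ (Fin d) | ∀ p ∈ Pb, ⟪p, y⟫ ≤ a p}.Nonempty)
    (hpolar : ∃ u : EuclideanSpace ℝ (Fin d), u ≠ 0 ∧ ∀ p ∈ Pb, ⟪u, p⟫ ≤ 0) :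
    (∀ u ∈ Pb,
      (⨆ y ∈ {y : EuclideanSpace ℝ (Fin d) | ∀ p ∈ Pb, ⟪p, y⟫ ≤ a p},
        ((⟪u, y⟫ : ℝ) : EReal)) = (a u : EReal)) ∧
    (∀ u : EuclideanSpace ℝ (Fin d), ‖u‖ = 1 → u ∉ Pb →
      (⨆ y ∈ {y : EuclideanSpace ℝ (Fin d) | ∀ p ∈ Pb, ⟪p, y⟫ ≤ a p},
        ((⟪u, y⟫ : ℝ) : EReal)) = ⊤) := by
  set C := ({q : EuclideanSpace ℝ (Fin d) |
        ∃ l : ℝ, 0 < l ∧ ∃ p ∈ Pb, q = l • p} ∪ {0}) with hC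
  constructor
  · intro u hu
    have hune : u ≠ 0 := by
      intro h; have := hPbsph u hu; rw [h] at this; simp at this
    obtain ⟨y₀, hy₀le, hy₀eq⟩ := aux_subgrad a haconv hahom u hune
    apply le_antisymm
    · refine iSup₂_le fun y hy => ?_
      exact_mod_cast hy u hu
    · refine le_iSup₂_of_le y₀ (fun p _ => hy₀le p) ?_
      exact_mod_cast le_of_eq hy₀eq.symm
  · intro u hnorm hu
    rw [EReal.eq_top_iff_forall_lt]
    intro r
    -- u ∉ C
    have huC : u ∉ C := by
      rintro (⟨l, hl, p, hp, rfl⟩ | h)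
      · have := hPbsph p hp
        rw [norm_smul, this, mul_one, Real.norm_eq_abs, abs_of_pos hl] at hnorm
        rw [hnorm, one_smul] at hu
        exact hu hp
      · simp only [Set.mem_singleton_iff] at h
        rw [h] at hnorm; simp at hnorm
    obtain ⟨f, s, hfs, hsu⟩ := geometric_hahn_banach_closed_point hCconv hCclosed huC
    have hf0 : (0:ℝ) < s := by
      have := hfs 0 (Or.inr rfl); simpa using this
    -- f ≤ 0 on C
    have hfC : ∀ c ∈ C, f c ≤ 0 := by
      intro c hc
      by_contra hpos
      push_neg at hpos
      -- scale
      obtain ⟨l, hl, p, hp, rfl⟩ | h := hc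
      · have hmem : ∀ t : ℝ, 0 < t → (t * l) • p ∈ C := by
          intro t ht; exact Or.inl ⟨t * l, mul_pos ht hl, p, hp, rfl⟩
        set t := (s + 1) / f (l • p) with ht
        have ht0 : 0 < t := div_pos (by linarith) hpos
        have := hfs ((t * l) • p) (hmem t ht0)
        rw [mul_smul, map_smul, smul_eq_mul] at this
        rw [ht] at this
        rw [div_mul_cancel₀ _ (ne_of_gt hpos)] at this
        linarith
      · simp only [Set.mem_singleton_iff] at h
        rw [h] at hpos; simp at hpos
    have hfu : 0 < f u := lt_trans hf0 hsu
    set v := (InnerProductSpace.toDual ℝ (EuclideanSpace ℝ (Fin d))).symm f with hv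
    have hvinner : ∀ x, ⟪v, x⟫ = f x := fun x =>
      InnerProductSpace.toDual_symm_apply
    have hvinner' : ∀ x : EuclideanSpace ℝ (Fin d), ⟪x, v⟫ = f x := fun x => by
      rw [real_inner_comm]; exact hvinner x
    obtain ⟨y₀, hy₀⟩ := hAne
    set t := max 1 ((r - ⟪u, y₀⟫ + 1) / f u) with ht
    have ht0 : 0 < t := lt_of_lt_of_le one_pos (le_max_left _ _)
    have hmemA : y₀ + t • v ∈ {y : EuclideanSpace ℝ (Fin d) | ∀ p ∈ Pb, ⟪p, y⟫ ≤ a p} := by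
      intro p hp
      have hpC : p ∈ C := Or.inl ⟨1, one_pos, p, hp, (one_smul ℝ p).symm⟩
      have h1 : ⟪p, v⟫ ≤ 0 := by
        rw [real_inner_comm, hvinner]; exact hfC p hpC
      have : ⟪p, y₀ + t • v⟫ = ⟪p, y₀⟫ + t * ⟪p, v⟫ := by
        rw [inner_add_right, inner_smul_right]
      rw [this]
      nlinarith [hy₀ p hp]
    refine lt_of_lt_of_le ?_ (le_iSup₂_of_le (y₀ + t • v) hmemA le_rfl)
    have hval : ⟪u, y₀ + t • v⟫ = ⟪u, y₀⟫ + t * f u := by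
      rw [inner_add_right, inner_smul_right, hvinner' u]
    rw [hval]
    have hge : (r - ⟪u, y₀⟫ + 1) / f u ≤ t := le_max_right _ _
    have : r - ⟪u, y₀⟫ + 1 ≤ t * f u := by
      rw [div_le_iff₀ hfu] at hge; linarith
    exact_mod_cast (by linarith : r < ⟪u, y₀⟫ + t * f u)
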